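/- Fix integers r ≥ 1, n ≥ 2 and δ ≥ n−1. Then the sequence ℓ ↦ (r+1)! · π̄(r,n,δℓ) / ℓ^{r+1} converges, as ℓ → ∞, to δ^{r+1}/(n−1)^r. -/

import Mathlib

open Filter

def pibar (r n δ : ℕ) : ℕ :=
  let ρ := δ / (n - 1)
  let m := δ - ρ * (n - 1) + 1
  let m' := n - 1 - m
  m * Nat.choose (r + ρ + 1) (r + 1) + m' * Nat.choose (r + ρ) (r + 1)

open Finset in
lemma desc_prod_aux (r ρ : ℕ) :
    (r + ρ).descFactorial r = ∏ i ∈ range r, (ρ + 1 + i) := by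
  induction r with
  | zero => simp
  | succ r ih =>
    have h : r + 1 + ρ = (r + ρ) + 1 := by ring
    rw [h, Nat.succ_descFactorial_succ, ih, prod_range_succ]
    ring

open Finset in
lemma key_identity (r q N : ℕ) (hq : 1 ≤ q) :
    Nat.factorial (r + 1) * ((N % q + 1) * Nat.choose (r + N / q + 1) (r + 1)
        + (q - (N % q + 1)) * Nat.choose (r + N / q) (r + 1))
      = (∏ i ∈ range r, (N / q + 1 + i)) * (N + 1 + (N % q + 1) * r) := by
  have hA : Nat.factorial (r + 1) * Nat.choose (r + N / q + 1) (r + 1)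
      = (∏ i ∈ range r, (N / q + 1 + i)) * (N / q + r + 1) := by
    rw [← Nat.descFactorial_eq_factorial_mul_choose,
      show r + N / q + 1 = (r + N / q) + 1 from rfl,
      Nat.succ_descFactorial_succ, desc_prod_aux]
    ring
  have hB : Nat.factorial (r + 1) * Nat.choose (r + N / q) (r + 1)
      = (∏ i ∈ range r, (N / q + 1 + i)) * (N / q) := by
    rw [← Nat.descFactorial_eq_factorial_mul_choose,
      Nat.descFactorial_succ, desc_prod_aux,
      show r + N / q - r = N / q from Nat.add_sub_cancel_left r (N / q)]
    ring
  have hm : N % q + 1 ≤ q := Nat.mod_lt N (by omega)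
  have hqd : q * (N / q) + N % q = N := Nat.div_add_mod N q
  calc Nat.factorial (r + 1) * ((N % q + 1) * Nat.choose (r + N / q + 1) (r + 1)
        + (q - (N % q + 1)) * Nat.choose (r + N / q) (r + 1))
      = (N % q + 1) * (Nat.factorial (r + 1) * Nat.choose (r + N / q + 1) (r + 1))
        + (q - (N % q + 1)) * (Nat.factorial (r + 1) * Nat.choose (r + N / q) (r + 1)) := by
        ring
    _ = (N % q + 1) * ((∏ i ∈ range r, (N / q + 1 + i)) * (N / q + r + 1))
        + (q - (N % q + 1)) * ((∏ i ∈ range r, (N / q + 1 + i)) * (N / q)) := by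
        rw [hA, hB]
    _ = (∏ i ∈ range r, (N / q + 1 + i)) * (N + 1 + (N % q + 1) * r) := by
        set P := ∏ i ∈ range r, (N / q + 1 + i) with hP
        set a := N / q with ha
        set s := N % q with hs
        rw [← hqd]
        zify [hm]
        ring

lemma pibar_eq (r n N : ℕ) (hn : 2 ≤ n) :
    pibar r n N = (N % (n - 1) + 1) * Nat.choose (r + N / (n - 1) + 1) (r + 1)
      + ((n - 1) - (N % (n - 1) + 1)) * Nat.choose (r + N / (n - 1)) (r + 1) := by
  have hq : 1 ≤ n - 1 := by omega
  have hmod : N - N / (n - 1) * (n - 1) = N % (n - 1) := by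
    have h := Nat.div_add_mod N (n - 1)
    have h' : N / (n - 1) * (n - 1) = (n - 1) * (N / (n - 1)) := mul_comm _ _
    omega
  unfold pibar
  simp only [hmod]

lemma tendsto_div_floor (δ q : ℕ) (hq : 1 ≤ q) :
    Tendsto (fun ℓ : ℕ => ((δ * ℓ / q : ℕ) : ℝ) / (ℓ : ℝ)) atTop
      (nhds ((δ : ℝ) / (q : ℝ))) := by
  have hq0 : (0 : ℝ) < (q : ℝ) := by exact_mod_cast hq
  have hlow : Tendsto (fun ℓ : ℕ => (δ : ℝ) / (q : ℝ) - 1 / (ℓ : ℝ)) atTop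
      (nhds ((δ : ℝ) / (q : ℝ))) := by
    have := tendsto_const_nhds (x := (δ : ℝ) / (q : ℝ)) (f := atTop (α := ℕ))
    have h0 : Tendsto (fun ℓ : ℕ => 1 / (ℓ : ℝ)) atTop (nhds 0) :=
      tendsto_one_div_atTop_nhds_zero_nat
    simpa using this.sub h0
  apply tendsto_of_tendsto_of_tendsto_of_le_of_le' hlow tendsto_const_nhds
  · filter_upwards [eventually_ge_atTop 1] with ℓ hℓ
    have hℓ0 : (0 : ℝ) < (ℓ : ℝ) := by exact_mod_cast hℓ
    have h1 : (δ * ℓ : ℝ) < ((δ * ℓ / q : ℕ) : ℝ) * (q : ℝ) + (q : ℝ) := by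
      have hnat : δ * ℓ < δ * ℓ / q * q + q := by
        have h := Nat.div_add_mod (δ * ℓ) q
        have h2 := Nat.mod_lt (δ * ℓ) (show 0 < q by omega)
        have h3 : δ * ℓ / q * q = q * (δ * ℓ / q) := mul_comm _ _
        omega
      exact_mod_cast hnat
    rw [sub_le_iff_le_add, div_add_div _ _ (ne_of_gt hℓ0) (ne_of_gt hℓ0),
      div_le_div_iff₀ (by positivity) (by positivity)]
    push_cast
    nlinarith
  · filter_upwards [eventually_ge_atTop 1] with ℓ hℓ
    have hℓ0 : (0 : ℝ) < (ℓ : ℝ) := by exact_mod_cast hℓ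
    have h1 : ((δ * ℓ / q : ℕ) : ℝ) * (q : ℝ) ≤ (δ * ℓ : ℝ) := by
      have := Nat.div_mul_le_self (δ * ℓ) q
      exact_mod_cast this
    rw [div_le_div_iff₀ hℓ0 hq0]
    push_cast
    nlinarith

theorem stmt_6 (r n δ : ℕ) (hr : 1 ≤ r) (hn : 2 ≤ n) (hδ : n - 1 ≤ δ) :
    Tendsto (fun ℓ : ℕ =>
        ((Nat.factorial (r + 1) * pibar r n (δ * ℓ) : ℕ) : ℝ) / (ℓ : ℝ) ^ (r + 1))
      atTop (nhds ((δ : ℝ) ^ (r + 1) / ((n - 1 : ℕ) : ℝ) ^ r)) := by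
  classical
  set q : ℕ := n - 1 with hqdef
  have hq1 : 1 ≤ q := by omega
  have hq0 : (0 : ℝ) < (q : ℝ) := by exact_mod_cast hq1
  -- target limit rewriting
  have hlim : (δ : ℝ) ^ (r + 1) / ((q : ℕ) : ℝ) ^ r
      = ((δ : ℝ) / (q : ℝ)) ^ r * (δ : ℝ) := by
    rw [div_pow]
    field_simp
    ring
  rw [hlim]
  -- the second factor
  have hsecond : Tendsto (fun ℓ : ℕ =>
      ((δ * ℓ + 1 + ((δ * ℓ) % q + 1) * r : ℕ) : ℝ) / (ℓ : ℝ)) atTop (nhds (δ : ℝ)) := by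
    have hup : Tendsto (fun ℓ : ℕ => (δ : ℝ) + ((1 + q * r : ℕ) : ℝ) / (ℓ : ℝ)) atTop
        (nhds (δ : ℝ)) := by
      have h0 : Tendsto (fun ℓ : ℕ => ((1 + q * r : ℕ) : ℝ) / (ℓ : ℝ)) atTop (nhds 0) :=
        tendsto_const_div_atTop_nhds_zero_nat _
      simpa using (tendsto_const_nhds (x := (δ : ℝ)) (f := atTop (α := ℕ))).add h0
    apply tendsto_of_tendsto_of_tendsto_of_le_of_le' tendsto_const_nhds hup
    · filter_upwards [eventually_ge_atTop 1] with ℓ hℓ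
      have hℓ0 : (0 : ℝ) < (ℓ : ℝ) := by exact_mod_cast hℓ
      rw [le_div_iff₀ hℓ0]
      push_cast
      nlinarith [Nat.cast_nonneg (α := ℝ) ((δ * ℓ) % q), Nat.cast_nonneg (α := ℝ) r]
    · filter_upwards [eventually_ge_atTop 1] with ℓ hℓ
      have hℓ0 : (0 : ℝ) < (ℓ : ℝ) := by exact_mod_cast hℓ
      have hm : (((δ * ℓ) % q : ℕ) : ℝ) + 1 ≤ (q : ℝ) := by
        have := Nat.mod_lt (δ * ℓ) (show 0 < q by omega)
        exact_mod_cast this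
      rw [div_le_iff₀ hℓ0]
      have hexp : ((δ : ℝ) + ((1 + q * r : ℕ) : ℝ) / (ℓ : ℝ)) * (ℓ : ℝ)
          = (δ : ℝ) * (ℓ : ℝ) + ((1 + q * r : ℕ) : ℝ) := by
        field_simp
      rw [hexp]
      push_cast
      nlinarith [Nat.cast_nonneg (α := ℝ) r]
  -- the product factor
  have hprod : Tendsto (fun ℓ : ℕ =>
      ∏ i ∈ Finset.range r, ((((δ * ℓ) / q : ℕ) : ℝ) + 1 + (i : ℝ)) / (ℓ : ℝ)) atTop
      (nhds (((δ : ℝ) / (q : ℝ)) ^ r)) := by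
    have h := tendsto_finset_prod (Finset.range r)
      (f := fun (i : ℕ) (ℓ : ℕ) => ((((δ * ℓ) / q : ℕ) : ℝ) + 1 + (i : ℝ)) / (ℓ : ℝ))
      (x := atTop) (a := fun _ => (δ : ℝ) / (q : ℝ)) ?_
    · simpa [div_pow] using h
    · intro i _
      have hc : Tendsto (fun ℓ : ℕ => ((1 + (i : ℝ))) / (ℓ : ℝ)) atTop (nhds 0) := by
        simpa using tendsto_const_div_atTop_nhds_zero_nat (1 + (i : ℝ))
      have := (tendsto_div_floor δ q hq1).add hc
      simp only [add_zero] at this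
      apply this.congr
      intro ℓ
      rw [← add_div]
      ring_nf
  -- combine
  have hG := hprod.mul hsecond
  apply hG.congr'
  filter_upwards [eventually_ge_atTop 1] with ℓ hℓ
  have hℓ0 : (0 : ℝ) < (ℓ : ℝ) := by exact_mod_cast hℓ
  have hkey := key_identity r q (δ * ℓ) hq1
  have hpb := pibar_eq r n (δ * ℓ) hn
  rw [← hqdef] at hpb
  have hN : (Nat.factorial (r + 1) * pibar r n (δ * ℓ) : ℕ)
      = (∏ i ∈ Finset.range r, ((δ * ℓ) / q + 1 + i)) * (δ * ℓ + 1 + ((δ * ℓ) % q + 1) * r) := by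
    rw [hpb, hkey]
  symm
  rw [hN]
  push_cast
  rw [Finset.prod_div_distrib, Finset.prod_const, Finset.card_range]
  field_simp
  ring
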